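/- Let B be a Hermitian matrix, u a unit vector with Rayleigh quotient α, and s = u + τ(I - uu*)t a minimizer of the Rayleigh quotient ρ over span{u, (I - uu*)t} with τ ≠ 0. Define J := (I - uu*)(B - ρ(s)I)(I - uu*). Then ρ(s) = α - |⟨(B - αI)u, (I - uu*)t⟩|² / ⟨J(I - uu*)t, (I - uu*)t⟩. -/

import Mathlib

open Matrix
open scoped ComplexConjugate

/-- Squared Euclidean norm of a complex vector. -/
noncomputable def nsq {k : ℕ} (x : Fin k → ℂ) : ℝ := ∑ i, ‖x i‖ ^ 2

/-- Standard Hermitian inner product (conjugate-linear in the first argument). -/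
noncomputable def cip {k : ℕ} (x y : Fin k → ℂ) : ℂ := ∑ i, conj (x i) * y i

/-- Orthogonal projection `(I - yy*) v`. -/
noncomputable def proj {k : ℕ} (y v : Fin k → ℂ) : Fin k → ℂ := v - cip y v • y

/-- Rayleigh quotient of a vector with respect to a (Hermitian) matrix. -/
noncomputable def rq {k : ℕ} (B : Matrix (Fin k) (Fin k) ℂ) (x : Fin k → ℂ) : ℝ :=
  (cip (B.mulVec x) x).re / nsq x

variable {k : ℕ}

lemma cip_add_right (x y z : Fin k → ℂ) : cip x (y + z) = cip x y + cip x z := by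
  simp [cip, mul_add, Finset.sum_add_distrib]

lemma cip_add_left (x y z : Fin k → ℂ) : cip (x + y) z = cip x z + cip y z := by
  simp [cip, add_mul, Finset.sum_add_distrib]

lemma cip_sub_right (x y z : Fin k → ℂ) : cip x (y - z) = cip x y - cip x z := by
  simp [cip, mul_sub, Finset.sum_sub_distrib]

lemma cip_smul_right (c : ℂ) (x y : Fin k → ℂ) : cip x (c • y) = c * cip x y := by
  simp [cip, Pi.smul_apply, smul_eq_mul, Finset.mul_sum, mul_left_comm]

lemma cip_smul_left (c : ℂ) (x y : Fin k → ℂ) : cip (c • x) y = conj c * cip x y := by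
  simp [cip, Pi.smul_apply, smul_eq_mul, Finset.mul_sum, mul_assoc]

lemma cip_conj (x y : Fin k → ℂ) : cip x y = conj (cip y x) := by
  simp [cip, map_sum, mul_comm]

lemma cip_self (x : Fin k → ℂ) : cip x x = (nsq x : ℂ) := by
  simp only [cip, nsq, Complex.ofReal_sum]
  refine Finset.sum_congr rfl fun i _ => ?_
  rw [mul_comm, Complex.mul_conj']; norm_cast

lemma nsq_nonneg (x : Fin k → ℂ) : 0 ≤ nsq x :=
  Finset.sum_nonneg fun i _ => by positivity

lemma nsq_pos (x : Fin k → ℂ) (hx : x ≠ 0) : 0 < nsq x := by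
  rcases (nsq_nonneg x).lt_or_eq with h | h
  · exact h
  · exfalso; apply hx
    funext i
    have := (Finset.sum_eq_zero_iff_of_nonneg (fun i _ => by positivity)).mp h.symm i (Finset.mem_univ i)
    simpa using this

lemma cip_herm {M : Matrix (Fin k) (Fin k) ℂ} (hM : Mᴴ = M) (x y : Fin k → ℂ) :
    cip (M.mulVec x) y = cip x (M.mulVec y) := by
  have hM' : ∀ i j, conj (M i j) = M j i := by
    intro i j
    conv_rhs => rw [← hM]
    simp [Matrix.conjTranspose_apply]
  simp only [cip, Matrix.mulVec, dotProduct, map_sum, _root_.map_mul, Finset.sum_mul,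
    Finset.mul_sum]
  rw [Finset.sum_comm]
  refine Finset.sum_congr rfl fun j _ => Finset.sum_congr rfl fun i _ => ?_
  rw [hM']; ring

lemma cancel_lemma (c : ℂ) (d : ℝ)
    (h : ∀ δ : ℝ, 0 < δ → 0 ≤ -2*δ*‖c‖^2 + δ^2*‖c‖^2*d) : c = 0 := by
  by_contra hc
  have hc2 : 0 < ‖c‖^2 := by have := norm_pos_iff.mpr hc; positivity
  set δ : ℝ := 1/(|d|+2) with hδdef
  have habs : (0:ℝ) < |d| + 2 := by have := abs_nonneg d; linarith
  have hδ : 0 < δ := by rw [hδdef]; exact div_pos one_pos habs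
  have h1 := h δ hδ
  have h2 : δ * d < 2 := by
    have : δ * d ≤ δ * |d| := by
      apply mul_le_mul_of_nonneg_left (le_abs_self d) hδ.le
    have h3 : δ * |d| < 1 := by
      rw [hδdef]
      rw [div_mul_eq_mul_div, one_mul, div_lt_one habs]
      linarith
    linarith
  nlinarith [mul_lt_mul_of_pos_left h2 (mul_pos hδ hc2)]

lemma expand_lemma {M : Matrix (Fin k) (Fin k) ℂ} (hM : Mᴴ = M)
    (s v : Fin k → ℂ) (hMs : cip (M.mulVec s) s = 0) (e : ℂ) :
    (cip (M.mulVec (s + e • v)) (s + e • v)).re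
      = 2 * (e * conj (cip (M.mulVec v) s)).re + ‖e‖^2 * (cip (M.mulVec v) v).re := by
  set c := cip (M.mulVec v) s with hc
  have h1 : M.mulVec (s + e • v) = M.mulVec s + e • M.mulVec v := by
    rw [Matrix.mulVec_add, Matrix.mulVec_smul]
  have h2 : cip (M.mulVec s) v = conj c := by
    rw [cip_herm hM, cip_conj, hc]
  have : cip (M.mulVec (s + e • v)) (s + e • v)
      = e * conj c + conj (e * conj c) + ((‖e‖^2 : ℝ) : ℂ) * cip (M.mulVec v) v := by
    rw [h1]
    simp only [cip_add_right, cip_add_left, cip_smul_right, cip_smul_left, hMs, h2, ← hc,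
      _root_.map_mul, Complex.conj_conj]
    have : e * (conj e * cip (M.mulVec v) v) = ((‖e‖^2 : ℝ) : ℂ) * cip (M.mulVec v) v := by
      rw [← mul_assoc, Complex.mul_conj']; norm_cast
    rw [mul_add, this]; ring
  rw [this]
  simp only [Complex.add_re, Complex.mul_re, Complex.conj_re, Complex.conj_im,
    Complex.ofReal_re, Complex.ofReal_im]
  ring

lemma cip_sub_left (x y z : Fin k → ℂ) : cip (x - y) z = cip x z - cip y z := by
  simp [cip, sub_mul, Finset.sum_sub_distrib]

lemma cip_zero_right (x : Fin k → ℂ) : cip x 0 = 0 := by simp [cip]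

theorem stmt3 {k : ℕ} (B : Matrix (Fin k) (Fin k) ℂ) (hB : Bᴴ = B)
    (u t : Fin k → ℂ) (hu : nsq u = 1)
    (w : Fin k → ℂ) (hw : w = proj u t)
    (τ : ℂ) (hτ : τ ≠ 0)
    (s : Fin k → ℂ) (hs : s = u + τ • w)
    (hmin : ∀ a b : ℂ, a • u + b • w ≠ 0 → rq B s ≤ rq B (a • u + b • w))
    (J : Matrix (Fin k) (Fin k) ℂ)
    (hJ : J = (1 - vecMulVec u (star u)) * (B - ((rq B s : ℝ) : ℂ) • 1) *
      (1 - vecMulVec u (star u)))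
    (hJw : cip (J.mulVec w) w ≠ 0) :
    rq B s = (cip (B.mulVec u) u).re -
      ‖cip ((B - cip (B.mulVec u) u • 1).mulVec u) w‖ ^ 2 / (cip (J.mulVec w) w).re := by
  set ρ : ℝ := rq B s with hρdef
  set M : Matrix (Fin k) (Fin k) ℂ := B - ((ρ : ℝ) : ℂ) • 1 with hMdef
  set P : Matrix (Fin k) (Fin k) ℂ := 1 - vecMulVec u (star u) with hPdef
  have hMherm : Mᴴ = M := by
    rw [hMdef, Matrix.conjTranspose_sub, Matrix.conjTranspose_smul, Matrix.conjTranspose_one,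
      hB, Complex.star_def, Complex.conj_ofReal]
  have hcuu : cip u u = 1 := by rw [cip_self, hu]; norm_num
  have hcuw : cip u w = 0 := by
    rw [hw]; unfold proj; rw [cip_sub_right, cip_smul_right, hcuu]; ring
  have hcwu : cip w u = 0 := by rw [cip_conj, hcuw]; simp
  have hw0 : w ≠ 0 := by
    intro h; apply hJw; rw [h, cip_zero_right]
  have hnw : 0 < nsq w := nsq_pos w hw0
  have hs0 : s ≠ 0 := by
    intro h
    have h7 : cip w s = 0 := by rw [h, cip_zero_right]
    rw [hs, cip_add_right, cip_smul_right, hcwu, cip_self] at h7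
    have : τ * (nsq w : ℂ) = 0 := by linear_combination h7
    rcases mul_eq_zero.mp this with h | h
    · exact hτ h
    · exact hnw.ne' (by exact_mod_cast h)
  have hnss : 0 < nsq s := nsq_pos s hs0
  have hBss : cip (B.mulVec s) s = ((cip (B.mulVec s) s).re : ℂ) := by
    have h1 := cip_herm hB s s
    rw [cip_conj s (B.mulVec s)] at h1
    exact (Complex.conj_eq_iff_re.mp h1.symm).symm
  have hre : (cip (B.mulVec s) s).re = ρ * nsq s := by
    rw [hρdef, rq, div_mul_cancel₀ _ hnss.ne']
  have hsmul1 : (((ρ : ℝ) : ℂ) • (1 : Matrix (Fin k) (Fin k) ℂ)).mulVec s = ((ρ:ℝ):ℂ) • s := by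
    rw [Matrix.smul_mulVec, Matrix.one_mulVec]
  have hMs : cip (M.mulVec s) s = 0 := by
    rw [hMdef, Matrix.sub_mulVec, hsmul1, cip_sub_left, cip_smul_left, cip_self, hBss, hre,
      Complex.conj_ofReal]
    push_cast
    ring
  have hkey : ∀ a b : ℂ, a • u + b • w ≠ 0 →
      0 ≤ (cip (M.mulVec (a•u+b•w)) (a•u+b•w)).re := by
    intro a b hx
    have h1 := hmin a b hx
    set x := a•u+b•w with hxdef
    have hnx : 0 < nsq x := nsq_pos x hx
    have h2 : ρ * nsq x ≤ (cip (B.mulVec x) x).re := by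
      rw [rq] at h1
      exact (le_div_iff₀ hnx).mp h1
    have hMx : (cip (M.mulVec x) x).re = (cip (B.mulVec x) x).re - ρ * nsq x := by
      rw [hMdef, Matrix.sub_mulVec, Matrix.smul_mulVec, Matrix.one_mulVec,
        cip_sub_left, cip_smul_left, cip_self, Complex.conj_ofReal, ← Complex.ofReal_mul]
      simp [Complex.sub_re, Complex.ofReal_re]
    linarith
  -- stationarity in direction u
  have hcu : cip (M.mulVec u) s = 0 := by
    apply cancel_lemma _ ((cip (M.mulVec u) u).re)
    intro δ hδ
    set c := cip (M.mulVec u) s with hcdef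
    set e : ℂ := -(δ:ℂ) * c with hedef
    have hxrep : s + e • u = (1 + e) • u + τ • w := by
      rw [hs]; module
    have hxne : (1 + e) • u + τ • w ≠ 0 := by
      intro h0
      have h7 := congrArg (cip w) h0
      rw [cip_zero_right, cip_add_right, cip_smul_right, cip_smul_right, hcwu, cip_self] at h7
      have : τ * (nsq w : ℂ) = 0 := by linear_combination h7
      rcases mul_eq_zero.mp this with h | h
      · exact hτ h
      · exact hnw.ne' (by exact_mod_cast h)
    have h0 := hkey (1+e) τ hxne
    rw [← hxrep, expand_lemma hMherm s u hMs e, ← hcdef] at h0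
    have h5 : (e * conj c).re = -δ * ‖c‖^2 := by
      rw [hedef, mul_assoc, Complex.mul_conj']
      norm_cast
    have h6 : ‖e‖^2 = δ^2 * ‖c‖^2 := by
      rw [hedef, norm_mul, norm_neg, Complex.norm_real, Real.norm_eq_abs, mul_pow, sq_abs]
    rw [h5, h6] at h0
    nlinarith [h0]
  -- stationarity in direction w
  have hcw : cip (M.mulVec w) s = 0 := by
    apply cancel_lemma _ ((cip (M.mulVec w) w).re)
    intro δ hδ
    set c := cip (M.mulVec w) s with hcdef
    set e : ℂ := -(δ:ℂ) * c with hedef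
    have hxrep : s + e • w = (1:ℂ) • u + (τ + e) • w := by
      rw [hs]; module
    have hxne : (1:ℂ) • u + (τ + e) • w ≠ 0 := by
      intro h0
      have h7 := congrArg (cip u) h0
      rw [cip_zero_right, cip_add_right, cip_smul_right, cip_smul_right, hcuw, hcuu] at h7
      simp at h7
    have h0 := hkey 1 (τ+e) hxne
    rw [← hxrep, expand_lemma hMherm s w hMs e, ← hcdef] at h0
    have h5 : (e * conj c).re = -δ * ‖c‖^2 := by
      rw [hedef, mul_assoc, Complex.mul_conj']
      norm_cast
    have h6 : ‖e‖^2 = δ^2 * ‖c‖^2 := by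
      rw [hedef, norm_mul, norm_neg, Complex.norm_real, Real.norm_eq_abs, mul_pow, sq_abs]
    rw [h5, h6] at h0
    nlinarith [h0]
  -- projector facts
  have hvv : (vecMulVec u (star u)).mulVec w = 0 := by
    funext i
    simp only [Matrix.mulVec, dotProduct, Matrix.vecMulVec_apply, Pi.star_apply,
      Pi.zero_apply]
    have h9 : ∑ j, u i * star (u j) * w j = u i * cip u w := by
      rw [cip, Finset.mul_sum]
      refine Finset.sum_congr rfl fun j _ => ?_
      rw [Complex.star_def]; ring
    rw [h9, hcuw, mul_zero]
  have hPw : P.mulVec w = w := by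
    rw [hPdef, Matrix.sub_mulVec, hvv, Matrix.one_mulVec, sub_zero]
  have hPherm : Pᴴ = P := by
    rw [hPdef, Matrix.conjTranspose_sub, Matrix.conjTranspose_one]
    congr 1
    ext i j
    simp only [Matrix.conjTranspose_apply, Matrix.vecMulVec_apply, Pi.star_apply,
      Complex.star_def, _root_.map_mul, Complex.conj_conj]
    ring
  have hJww : cip (J.mulVec w) w = cip (M.mulVec w) w := by
    rw [hJ, ← Matrix.mulVec_mulVec, ← Matrix.mulVec_mulVec, hPw, cip_herm hPherm, hPw]
  -- real quantities
  have hαreal : cip (B.mulVec u) u = ((cip (B.mulVec u) u).re : ℂ) := by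
    have h1 := cip_herm hB u u
    rw [cip_conj u (B.mulVec u)] at h1
    exact (Complex.conj_eq_iff_re.mp h1.symm).symm
  set α : ℝ := (cip (B.mulVec u) u).re with hαdef
  have hγreal : cip (M.mulVec w) w = ((cip (M.mulVec w) w).re : ℂ) := by
    have h1 := cip_herm hMherm w w
    rw [cip_conj w (M.mulVec w)] at h1
    exact (Complex.conj_eq_iff_re.mp h1.symm).symm
  set γ : ℝ := (cip (M.mulVec w) w).re with hγdef
  have hγ0 : γ ≠ 0 := by
    intro h
    apply hJw
    rw [hJww, hγreal, h, Complex.ofReal_zero]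
  set β : ℂ := cip (B.mulVec u) w with hβdef
  have hβstmt : cip ((B - cip (B.mulVec u) u • 1).mulVec u) w = β := by
    rw [Matrix.sub_mulVec, Matrix.smul_mulVec, Matrix.one_mulVec, cip_sub_left,
      cip_smul_left, hcuw, mul_zero, sub_zero, ← hβdef]
  have hMu_u : cip (M.mulVec u) u = (α:ℂ) - (ρ:ℂ) := by
    rw [hMdef, Matrix.sub_mulVec, Matrix.smul_mulVec, Matrix.one_mulVec, cip_sub_left,
      cip_smul_left, Complex.conj_ofReal, hcuu, hαreal, mul_one]
  have hMu_w : cip (M.mulVec u) w = β := by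
    rw [hMdef, Matrix.sub_mulVec, Matrix.smul_mulVec, Matrix.one_mulVec, cip_sub_left,
      cip_smul_left, hcuw, mul_zero, sub_zero, ← hβdef]
  have hMw_u : cip (M.mulVec w) u = conj β := by
    rw [cip_herm hMherm, cip_conj, hMu_w]
  have eq1 : (α:ℂ) - (ρ:ℂ) + τ * β = 0 := by
    rw [hs, cip_add_right, cip_smul_right, hMu_u, hMu_w] at hcu
    linear_combination hcu
  have eq2 : conj β + τ * (γ:ℂ) = 0 := by
    rw [hs, cip_add_right, cip_smul_right, hMw_u] at hcw
    linear_combination hcw - τ * hγreal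
  have hττ : τ * conj τ = ((‖τ‖^2:ℝ):ℂ) := by rw [Complex.mul_conj']; norm_cast
  have hβval : β = -(conj τ) * (γ:ℂ) := by
    have h1 := congrArg conj eq2
    simp only [map_add, _root_.map_mul, Complex.conj_conj, map_zero, Complex.conj_ofReal] at h1
    linear_combination h1
  have eq1' : (α:ℂ) - (ρ:ℂ) = ((‖τ‖^2:ℝ):ℂ) * (γ:ℂ) := by
    linear_combination eq1 - τ * hβval + (γ:ℂ) * hττ
  have hρval : ρ = α - ‖τ‖^2 * γ := by
    have h1 := eq1'
    push_cast at h1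
    have h2 : α - ρ = ‖τ‖^2*γ := by exact_mod_cast h1
    linarith
  have hnβ : ‖β‖^2 = ‖τ‖^2 * γ^2 := by
    rw [hβval, norm_mul, norm_neg, RCLike.norm_conj, Complex.norm_real, Real.norm_eq_abs,
      mul_pow, sq_abs]
  rw [hβstmt, hJww, ← hγdef, hnβ, hρval]
  have h3 : ‖τ‖^2*γ^2/γ = ‖τ‖^2*γ := by field_simp
  rw [h3]
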